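/- Let H be a real Hilbert space, ζ ∈ H with ζ ≠ 0, η ∈ H, and μ ∈ (0, 1/2). Let y : [0,∞) → H be differentiable and g : [0,∞) → H satisfy ⟨g(t), ζ⟩ = ⟨y(t), η⟩ for all t ≥ 0, and suppose for all t > 0 that y'(t) = g(t) − c(t)·ζ − (⟨y(t), η⟩/‖ζ‖²)·ζ, where c(t) = ⟨y(t), ζ⟩·|⟨y(t), ζ⟩|^{−2μ} if ⟨y(t), ζ⟩ ≠ 0 and c(t) = 0 otherwise. Then, setting T₁ := |⟨y(0), ζ⟩|^{2μ}/(2μ‖ζ‖²), one has |⟨y(t), ζ⟩|^{2μ} ≤ |⟨y(0), ζ⟩|^{2μ} − 2μ‖ζ‖²·t for all t ∈ [0, T₁], and ⟨y(t), ζ⟩ = 0 for all t ≥ T₁. -/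

import Mathlib

open RealInnerProductSpace

/-- Trajectory-level core of Proposition 4.1: under the feedback
`c(t) = ⟨y,ζ⟩|⟨y,ζ⟩|^(-2μ)` (switched off when `⟨y,ζ⟩ = 0`), and the compatibility
`⟨g(t), ζ⟩ = ⟨y(t), η⟩` (with `η` playing the role of `A*ζ`), the output `⟨y(t), ζ⟩`
decays as `|⟨y(t),ζ⟩|^(2μ) ≤ |⟨y(0),ζ⟩|^(2μ) - 2μ‖ζ‖² t` and vanishes after
`T₁ = |⟨y(0),ζ⟩|^(2μ)/(2μ‖ζ‖²)`. -/
theorem feedback_drives_scalar_output_to_zero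
    {H : Type*} [NormedAddCommGroup H] [InnerProductSpace ℝ H] [CompleteSpace H]
    (ζ η : H) (hζ : ζ ≠ 0)
    (μ : ℝ) (hμ : μ ∈ Set.Ioo (0:ℝ) (1/2))
    (y : ℝ → H) (g : ℝ → H) (c : ℝ → ℝ)
    (hycont : ContinuousOn y (Set.Ici 0))
    (hg : ∀ t ≥ (0:ℝ), ⟪g t, ζ⟫ = ⟪y t, η⟫)
    (hyderiv : ∀ t > (0:ℝ),
      HasDerivAt y (g t - c t • ζ - ((⟪y t, η⟫ : ℝ) / ‖ζ‖ ^ 2) • ζ) t)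
    (hc : ∀ t : ℝ, (⟪y t, ζ⟫ : ℝ) ≠ 0 →
      c t = (⟪y t, ζ⟫ : ℝ) * |(⟪y t, ζ⟫ : ℝ)| ^ (-(2 * μ)))
    (hc0 : ∀ t : ℝ, (⟪y t, ζ⟫ : ℝ) = 0 → c t = 0) :
    (∀ t : ℝ, 0 ≤ t → t ≤ |(⟪y 0, ζ⟫ : ℝ)| ^ (2 * μ) / (2 * μ * ‖ζ‖ ^ 2) →
      |(⟪y t, ζ⟫ : ℝ)| ^ (2 * μ) ≤ |(⟪y 0, ζ⟫ : ℝ)| ^ (2 * μ) - 2 * μ * ‖ζ‖ ^ 2 * t) ∧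
    (∀ t ≥ |(⟪y 0, ζ⟫ : ℝ)| ^ (2 * μ) / (2 * μ * ‖ζ‖ ^ 2), (⟪y t, ζ⟫ : ℝ) = 0) := by
  obtain ⟨hμ0, hμ2⟩ := hμ
  have hζ2 : (0:ℝ) < ‖ζ‖ ^ 2 := by
    have := norm_pos_iff.mpr hζ; positivity
  set φ : ℝ → ℝ := fun t => ⟪y t, ζ⟫ with hφdef
  set K : ℝ := 2 * μ * ‖ζ‖ ^ 2 with hKdef
  have hK : 0 < K := by positivity
  have h2μ : (0:ℝ) < 2 * μ := by linarith
  set ψ : ℝ → ℝ := fun t => |φ t| ^ (2 * μ) with hψdef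
  have hψnn : ∀ t, 0 ≤ ψ t := fun t => Real.rpow_nonneg (abs_nonneg _) _
  have hφcont : ContinuousOn φ (Set.Ici 0) := hycont.inner continuousOn_const
  have hψcont : ContinuousOn ψ (Set.Ici 0) :=
    hφcont.abs.rpow_const (fun x _ => Or.inr h2μ.le)
  -- derivative of φ
  have hφd : ∀ t > (0:ℝ), HasDerivAt φ (-(c t * ‖ζ‖ ^ 2)) t := by
    intro t ht
    have h1 := HasDerivAt.inner ℝ (hyderiv t ht) (hasDerivAt_const t ζ)
    have h2 : (⟪y t, (0:H)⟫ : ℝ) + ⟪g t - c t • ζ - ((⟪y t, η⟫ : ℝ) / ‖ζ‖ ^ 2) • ζ, ζ⟫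
        = -(c t * ‖ζ‖ ^ 2) := by
      rw [inner_zero_right, inner_sub_left, inner_sub_left, real_inner_smul_left,
        real_inner_smul_left, real_inner_self_eq_norm_sq, hg t ht.le]
      field_simp
      ring
    rw [h2] at h1
    exact h1
  -- derivative of ψ where φ ≠ 0
  have hψd : ∀ t > (0:ℝ), φ t ≠ 0 → HasDerivAt ψ (-K) t := by
    intro t ht hne
    rcases lt_or_gt_of_ne hne with hneg | hpos
    · have hp : (0:ℝ) < -φ t := by linarith
      have hct : ContinuousAt φ t := (hφd t ht).continuousAt
      have ev : ∀ᶠ s in nhds t, φ s ∈ Set.Iio 0 :=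
        hct.eventually_mem (isOpen_Iio.mem_nhds hneg)
      have heq : ψ =ᶠ[nhds t] fun s => (-φ s) ^ (2 * μ) := by
        filter_upwards [ev] with s hs
        rw [hψdef]; simp only [abs_of_neg (Set.mem_Iio.mp hs)]
      have hd : HasDerivAt (fun s => (-φ s) ^ (2 * μ))
          ((c t * ‖ζ‖ ^ 2) * (2 * μ) * (-φ t) ^ (2 * μ - 1)) t := by
        have := ((hφd t ht).neg).rpow_const (p := 2 * μ) (Or.inl hp.ne')
        simpa using this
      have hval : (c t * ‖ζ‖ ^ 2) * (2 * μ) * (-φ t) ^ (2 * μ - 1) = -K := by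
        have hcc : c t = -((-φ t) ^ (1 - 2 * μ)) := by
          rw [hc t hne]
          rw [abs_of_neg hneg]
          rw [show (1 - 2*μ) = 1 + -(2*μ) by ring, Real.rpow_add hp, Real.rpow_one]
          ring
        rw [hcc]
        rw [show ((-((-φ t) ^ (1 - 2*μ))) * ‖ζ‖^2) * (2*μ) * (-φ t) ^ (2*μ - 1)
            = -(2 * μ * ‖ζ‖^2) * ((-φ t) ^ (1 - 2*μ) * (-φ t) ^ (2*μ - 1)) by ring]
        rw [← Real.rpow_add hp]
        norm_num
        exact hKdef.symm
      rw [hval] at hd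
      exact hd.congr_of_eventuallyEq heq
    · have hct : ContinuousAt φ t := (hφd t ht).continuousAt
      have ev : ∀ᶠ s in nhds t, φ s ∈ Set.Ioi 0 :=
        hct.eventually_mem (isOpen_Ioi.mem_nhds hpos)
      have heq : ψ =ᶠ[nhds t] fun s => (φ s) ^ (2 * μ) := by
        filter_upwards [ev] with s hs
        rw [hψdef]; simp only [abs_of_pos (Set.mem_Ioi.mp hs)]
      have hd : HasDerivAt (fun s => (φ s) ^ (2 * μ))
          ((-(c t * ‖ζ‖ ^ 2)) * (2 * μ) * (φ t) ^ (2 * μ - 1)) t :=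
        (hφd t ht).rpow_const (Or.inl hpos.ne')
      have hval : (-(c t * ‖ζ‖ ^ 2)) * (2 * μ) * (φ t) ^ (2 * μ - 1) = -K := by
        have hcc : c t = (φ t) ^ (1 - 2 * μ) := by
          rw [hc t hne, abs_of_pos hpos]
          rw [show (1 - 2*μ) = 1 + -(2*μ) by ring, Real.rpow_add hpos, Real.rpow_one]
        rw [hcc]
        rw [show (-((φ t) ^ (1 - 2*μ) * ‖ζ‖^2)) * (2*μ) * (φ t) ^ (2*μ - 1)
            = -(2 * μ * ‖ζ‖^2) * ((φ t) ^ (1 - 2*μ) * (φ t) ^ (2*μ - 1)) by ring]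
        rw [← Real.rpow_add hpos]
        norm_num
        exact hKdef.symm
      rw [hval] at hd
      exact hd.congr_of_eventuallyEq heq
  -- exact decay on intervals where φ is nonzero
  have lemL : ∀ a b : ℝ, 0 ≤ a → a < b → (∀ s ∈ Set.Ioo a b, φ s ≠ 0) →
      ψ b = ψ a - K * (b - a) := by
    intro a b ha hab hnz
    set F : ℝ → ℝ := fun s => ψ s + K * s with hFdef
    have key : ∀ x ∈ Set.Ioo a b, ∀ z ∈ Set.Ioo a b, x ≤ z → F z = F x := by
      intro x hx z hz hxz
      have hd : ∀ u ∈ Set.Icc x z, HasDerivAt F 0 u := by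
        intro u hu
        have hu' : u ∈ Set.Ioo a b := ⟨lt_of_lt_of_le hx.1 hu.1, lt_of_le_of_lt hu.2 hz.2⟩
        have h0 : 0 < u := lt_of_le_of_lt ha hu'.1
        have := (hψd u h0 (hnz u hu')).add ((hasDerivAt_id u).const_mul K)
        simp only [mul_one, neg_add_cancel] at this
        exact this
      have := constant_of_has_deriv_right_zero (f := F) (a := x) (b := z)
        (fun u hu => (hd u hu).continuousAt.continuousWithinAt)
        (fun u hu => (hd u ⟨hu.1, hu.2.le⟩).hasDerivWithinAt)
      exact this z ⟨hxz, le_refl z⟩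
    have hFa : ∀ z ∈ Set.Ioo a b, F z = F a := by
      intro z hz
      have htend : Filter.Tendsto F (nhdsWithin a (Set.Ioi a)) (nhds (F a)) := by
        have h1 : Filter.Tendsto ψ (nhdsWithin a (Set.Ioi a)) (nhds (ψ a)) :=
          ((hψcont a (Set.mem_Ici.mpr ha)).mono
            (fun u (hu : u ∈ Set.Ioi a) => le_trans ha hu.le)).tendsto
        exact h1.add (((continuous_const.mul continuous_id).continuousAt).tendsto.mono_left
          nhdsWithin_le_nhds)
      have hev : F =ᶠ[nhdsWithin a (Set.Ioi a)] fun _ => F z := by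
        filter_upwards [Ioo_mem_nhdsGT hz.1] with x hx
        exact (key x ⟨hx.1, lt_trans hx.2 hz.2⟩ z hz hx.2.le).symm
      have : Filter.Tendsto (fun _ : ℝ => F z) (nhdsWithin a (Set.Ioi a)) (nhds (F a)) :=
        htend.congr' hev
      exact (tendsto_nhds_unique this tendsto_const_nhds).symm
    have hFb : F b = F a := by
      have hne : (nhdsWithin b (Set.Ioo a b)).NeBot := by
        apply mem_closure_iff_nhdsWithin_neBot.mp
        rw [closure_Ioo hab.ne]
        exact ⟨hab.le, le_refl b⟩
      have htend : Filter.Tendsto F (nhdsWithin b (Set.Ioo a b)) (nhds (F b)) := by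
        have h1 : Filter.Tendsto ψ (nhdsWithin b (Set.Ioo a b)) (nhds (ψ b)) :=
          ((hψcont b (Set.mem_Ici.mpr (le_trans ha hab.le))).mono
            (fun u hu => le_trans ha hu.1.le)).tendsto
        exact h1.add (((continuous_const.mul continuous_id).continuousAt).tendsto.mono_left
          nhdsWithin_le_nhds)
      have hev : F =ᶠ[nhdsWithin b (Set.Ioo a b)] fun _ => F a := by
        filter_upwards [self_mem_nhdsWithin] with x hx
        exact hFa x hx
      exact tendsto_nhds_unique (htend.congr' hev) tendsto_const_nhds
    have : ψ b + K * b = ψ a + K * a := hFb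
    linarith
  -- once zero, always zero
  have claimA : ∀ t₀, 0 ≤ t₀ → φ t₀ = 0 → ∀ t, t₀ ≤ t → φ t = 0 := by
    intro t₀ ht₀ hz0 t htt
    by_contra hne
    have hlt : t₀ < t := lt_of_le_of_ne htt (fun h => hne (h ▸ hz0))
    set S := {u ∈ Set.Icc t₀ t | φ u = 0} with hSdef
    have hSc : IsClosed S :=
      (hφcont.mono (fun u hu => le_trans ht₀ hu.1)).preimage_isClosed_of_isClosed
        isClosed_Icc isClosed_singleton
    have hs : sSup S ∈ S := hSc.csSup_mem ⟨t₀, ⟨le_refl _, hlt.le⟩, hz0⟩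
      ⟨t, fun u hu => hu.1.2⟩
    set s := sSup S with hsdef
    have hsn : s < t := lt_of_le_of_ne hs.1.2 (fun h => hne (h ▸ hs.2))
    have hnz : ∀ u ∈ Set.Ioo s t, φ u ≠ 0 := by
      intro u hu h0
      have hum : u ∈ S := ⟨⟨le_trans hs.1.1 hu.1.le, hu.2.le⟩, h0⟩
      exact absurd (le_csSup ⟨t, fun v hv => hv.1.2⟩ hum) (not_le.mpr hu.1)
    have heq := lemL s t (le_trans ht₀ hs.1.1) hsn hnz
    have hψs : ψ s = 0 := by
      rw [hψdef]; simp only [hs.2, abs_zero]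
      exact Real.zero_rpow h2μ.ne'
    have : ψ t < 0 := by
      rw [heq, hψs]; nlinarith
    exact absurd this (not_lt.mpr (hψnn t))
  -- main argument
  rcases eq_or_ne (φ 0) 0 with hz | hz
  · have hψ0 : |φ 0| ^ (2 * μ) = 0 := by
      rw [hz, abs_zero]; exact Real.zero_rpow h2μ.ne'
    constructor
    · intro t ht0 htT
      rw [hψ0] at htT ⊢
      have ht0' : t = 0 := le_antisymm (by simpa [hK.ne'] using htT) ht0
      subst ht0'
      simp [hψ0]
      exact hψ0.le
    · intro t ht
      have : (0:ℝ) ≤ t := le_trans (by positivity) ht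
      exact claimA 0 le_rfl hz t this
  · -- there is a first zero
    set S := {u : ℝ | 0 ≤ u ∧ φ u = 0} with hSdef
    have hSne : S.Nonempty := by
      by_contra hS
      have hnz : ∀ u, 0 ≤ u → φ u ≠ 0 := by
        intro u hu h0
        exact hS ⟨u, hu, h0⟩
      set b : ℝ := (ψ 0 + 1) / K with hbdef
      have hb : 0 < b := div_pos (by have := hψnn 0; linarith) hK
      have := lemL 0 b le_rfl hb (fun u hu => hnz u hu.1.le)
      have hKb : K * b = ψ 0 + 1 := by
        rw [hbdef]; field_simp
      have : ψ b < 0 := by rw [this]; rw [show K * (b - 0) = K * b by ring, hKb]; linarith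
      exact absurd this (not_lt.mpr (hψnn b))
    have hSc : IsClosed S := by
      have : S = Set.Ici 0 ∩ φ ⁻¹' {0} := by
        ext u; simp [hSdef, Set.mem_Ici]
      rw [this]
      exact hφcont.preimage_isClosed_of_isClosed isClosed_Ici isClosed_singleton
    have hτ : sInf S ∈ S := hSc.csInf_mem hSne ⟨0, fun u hu => hu.1⟩
    set τ := sInf S with hτdef
    have hτpos : 0 < τ := by
      rcases eq_or_lt_of_le hτ.1 with h | h
      · exact absurd (h ▸ hτ.2) hz
      · exact h
    have hnz : ∀ u ∈ Set.Ioo 0 τ, φ u ≠ 0 := by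
      intro u hu h0
      exact absurd (csInf_le ⟨0, fun v hv => hv.1⟩ (show u ∈ S from ⟨hu.1.le, h0⟩)) (not_le.mpr hu.2)
    have hψτ : ψ τ = ψ 0 - K * (τ - 0) := lemL 0 τ le_rfl hτpos hnz
    have hψτ0 : ψ τ = 0 := by
      rw [hψdef]; simp only [hτ.2, abs_zero]; exact Real.zero_rpow h2μ.ne'
    have hτT : τ = |φ 0| ^ (2 * μ) / K := by
      rw [eq_div_iff hK.ne']
      have : ψ 0 = |φ 0| ^ (2 * μ) := rfl
      rw [hψτ0] at hψτ
      linarith [hψτ]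
    constructor
    · intro t ht0 htT
      rw [← hτT] at htT
      rcases eq_or_lt_of_le ht0 with h0 | h0
      · rw [← h0]; simp
      rcases eq_or_lt_of_le htT with hT | hT
      · subst hT
        have : ψ τ ≤ ψ 0 - K * τ := by rw [hψτ]; ring_nf; exact le_refl _
        calc |φ τ| ^ (2*μ) = ψ τ := rfl
          _ ≤ ψ 0 - K * τ := this
          _ = |φ 0| ^ (2*μ) - K * τ := rfl
      · have := lemL 0 t le_rfl h0 (fun u hu => hnz u ⟨hu.1, lt_trans hu.2 hT⟩)
        calc |φ t| ^ (2*μ) = ψ t := rfl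
          _ = ψ 0 - K * (t - 0) := this
          _ ≤ |φ 0| ^ (2*μ) - K * t := by
              have : ψ 0 = |φ 0| ^ (2*μ) := rfl
              linarith [this]
    · intro t ht
      rw [← hτT] at ht
      exact claimA τ hτpos.le hτ.2 t ht
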